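/- Let A be a weakly amenable Banach algebra over ℂ such that A is I-weakly amenable for every closed two-sided ideal I of A satisfying I = the closed linear span of {ai : a ∈ A, i ∈ I} ∪ {ia : a ∈ A, i ∈ I}. Then A is ideally amenable, i.e. A is I-weakly amenable for every closed two-sided ideal I of A. -/

import Mathlib

theorem aux_mem_of_closure_span {E F : Type*} [NormedAddCommGroup E] [NormedSpace ℂ E]
    [NormedAddCommGroup F] [NormedSpace ℂ F]
    (T : E →L[ℂ] F) (s : Set E) (K : Submodule ℂ F) (hK : IsClosed (K : Set F))
    (h : ∀ x ∈ s, T x ∈ K) {x : E}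
    (hx : x ∈ (Submodule.span ℂ s).topologicalClosure) : T x ∈ K := by
  have hle : (Submodule.span ℂ s).topologicalClosure ≤ K.comap (T : E →ₗ[ℂ] F) := by
    apply Submodule.topologicalClosure_minimal
    · exact Submodule.span_le.2 h
    · exact hK.preimage T.continuous
  exact hle hx

theorem aux_dense_products {A : Type*} [NonUnitalNormedRing A] [NormedSpace ℂ A]
    [IsScalarTower ℂ A A] [SMulCommClass ℂ A A] [CompleteSpace A]
    (hWA : ∀ D : A →L[ℂ] (A →L[ℂ] ℂ),
      (∀ a b c : A, D (a * b) c = D b (c * a) + D a (b * c)) →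
      ∃ f : A →L[ℂ] ℂ, ∀ a b : A, D a b = f (b * a - a * b)) :
    (Submodule.span ℂ {x : A | ∃ a b : A, x = a * b}).topologicalClosure = ⊤ := by
  by_contra hne
  set P := (Submodule.span ℂ {x : A | ∃ a b : A, x = a * b}).topologicalClosure with hP
  obtain ⟨a, ha⟩ : ∃ a : A, a ∉ P := by
    by_contra h
    push_neg at h
    exact hne (Submodule.eq_top_iff'.2 h)
  haveI hPc : IsClosed (P : Set A) := Submodule.isClosed_topologicalClosure _
  have hmkne : (Submodule.Quotient.mk a : A ⧸ P) ≠ 0 := by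
    simpa [Submodule.Quotient.mk_eq_zero] using ha
  obtain ⟨g, hg1, hg2⟩ := exists_dual_vector ℂ (Submodule.Quotient.mk a : A ⧸ P) (norm_ne_zero_iff.2 hmkne)
  let mkL : A →L[ℂ] (A ⧸ P) := LinearMap.mkContinuous P.mkQ 1 fun m => by
    simpa using Submodule.Quotient.norm_mk_le P m
  let l : A →L[ℂ] ℂ := g.comp mkL
  have hl0 : ∀ x ∈ P, l x = 0 := by
    intro x hx
    have : P.mkQ x = 0 := (Submodule.Quotient.mk_eq_zero _).2 hx
    simp [l, mkL, ContinuousLinearMap.comp_apply, this]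
  have hlprod : ∀ x y : A, l (x * y) = 0 := by
    intro x y
    refine hl0 _ (Submodule.le_topologicalClosure _ ?_)
    exact Submodule.subset_span ⟨x, y, rfl⟩
  let D0 : A →L[ℂ] (A →L[ℂ] ℂ) := l.smulRight l
  have hder : ∀ x y z : A, D0 (x * y) z = D0 y (z * x) + D0 x (y * z) := by
    intro x y z
    simp [D0, ContinuousLinearMap.smulRight_apply, hlprod, smul_eq_mul]
  obtain ⟨f, hf⟩ := hWA D0 hder
  have : l a * l a = 0 := by
    have := hf a a
    simpa [D0, ContinuousLinearMap.smulRight_apply, smul_eq_mul] using this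
  have hla : l a = 0 := mul_self_eq_zero.1 this
  have : g (Submodule.Quotient.mk a : A ⧸ P) = 0 := hla
  rw [hg2] at this
  have hn0 : ‖(Submodule.Quotient.mk a : A ⧸ P)‖ = 0 := Complex.ofReal_eq_zero.1 this
  exact hmkne (norm_eq_zero.1 hn0)

set_option maxHeartbeats 1000000 in
/-- If `A` is weakly amenable and `A` is `I`-weakly amenable for every
closed two-sided ideal `I` with `I = closure (span (A·I ∪ I·A))`, then `A` is ideally
amenable. -/
theorem ideallyAmenable_of_weaklyAmenable_and_essential_ideals
    {A : Type*} [NonUnitalNormedRing A] [NormedSpace ℂ A]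
    [IsScalarTower ℂ A A] [SMulCommClass ℂ A A] [CompleteSpace A]
    -- `A` is weakly amenable
    (hWA : ∀ D : A →L[ℂ] (A →L[ℂ] ℂ),
      (∀ a b c : A, D (a * b) c = D b (c * a) + D a (b * c)) →
      ∃ f : A →L[ℂ] ℂ, ∀ a b : A, D a b = f (b * a - a * b))
    -- `A` is `I`-weakly amenable for every closed two-sided ideal `I` with
    -- `I` equal to the closed linear span of `{a*i} ∪ {i*a}`
    (hEss : ∀ I : Submodule ℂ A, IsClosed (I : Set A) →
      ∀ hI : (∀ a : A, ∀ x ∈ I, a * x ∈ I ∧ x * a ∈ I),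
      (Submodule.span ℂ {x : A | ∃ a : A, ∃ i ∈ I, x = a * i ∨ x = i * a}).topologicalClosure
        = I →
      ∀ D : A →L[ℂ] (↥I →L[ℂ] ℂ),
        (∀ a b : A, ∀ i : ↥I,
          D (a * b) i = D b ⟨(i : A) * a, (hI a i i.2).2⟩ +
            D a ⟨b * (i : A), (hI b i i.2).1⟩) →
        ∃ f : ↥I →L[ℂ] ℂ, ∀ a : A, ∀ i : ↥I,
          D a i = f ⟨(i : A) * a - a * (i : A),
            I.sub_mem (hI a i i.2).2 (hI a i i.2).1⟩) :
    -- then `A` is ideally amenable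
    ∀ I : Submodule ℂ A, IsClosed (I : Set A) →
      ∀ hI : (∀ a : A, ∀ x ∈ I, a * x ∈ I ∧ x * a ∈ I),
      ∀ D : A →L[ℂ] (↥I →L[ℂ] ℂ),
        (∀ a b : A, ∀ i : ↥I,
          D (a * b) i = D b ⟨(i : A) * a, (hI a i i.2).2⟩ +
            D a ⟨b * (i : A), (hI b i i.2).1⟩) →
        ∃ f : ↥I →L[ℂ] ℂ, ∀ a : A, ∀ i : ↥I,
          D a i = f ⟨(i : A) * a - a * (i : A),
            I.sub_mem (hI a i i.2).2 (hI a i i.2).1⟩ := by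
  intro I hIcl hI D hD
  have hdense := aux_dense_products hWA
  set prods : Set A := {x : A | ∃ a b : A, x = a * b} with hprods
  set SI : Set A := {x : A | ∃ a : A, ∃ i ∈ I, x = a * i ∨ x = i * a} with hSIdef
  set J : Submodule ℂ A := (Submodule.span ℂ SI).topologicalClosure with hJdef
  have hJcl : IsClosed (J : Set A) := Submodule.isClosed_topologicalClosure _
  have hSII : SI ⊆ (I : Set A) := by
    rintro x ⟨a, i, hi, rfl | rfl⟩
    · exact (hI a i hi).1
    · exact (hI a i hi).2
  have hJI : J ≤ I := Submodule.topologicalClosure_minimal _ (Submodule.span_le.2 hSII) hIcl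
  have hSIJ : ∀ x ∈ SI, x ∈ J :=
    fun x hx => Submodule.le_topologicalClosure _ (Submodule.subset_span hx)
  -- J is a two-sided ideal
  have hJ : ∀ a : A, ∀ x ∈ J, a * x ∈ J ∧ x * a ∈ J := by
    intro a x hx
    constructor
    · have h' : ∀ y ∈ SI, (ContinuousLinearMap.mul ℂ A a) y ∈ J := by
        rintro y ⟨b, i, hi, rfl | rfl⟩
        · simpa using hSIJ (a * (b * i)) ⟨a * b, i, hi, Or.inl (mul_assoc a b i).symm⟩
        · simpa using hSIJ (a * (i * b)) ⟨b, a * i, (hI a i hi).1, Or.inr (mul_assoc a i b).symm⟩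
      simpa using aux_mem_of_closure_span (ContinuousLinearMap.mul ℂ A a) SI J hJcl h' hx
    · have h' : ∀ y ∈ SI, ((ContinuousLinearMap.mul ℂ A).flip a) y ∈ J := by
        rintro y ⟨b, i, hi, rfl | rfl⟩
        · simpa using hSIJ ((b * i) * a) ⟨b, i * a, (hI a i hi).2, Or.inl (mul_assoc b i a)⟩
        · simpa using hSIJ ((i * b) * a) ⟨b * a, i, hi, Or.inr (mul_assoc i b a)⟩
      simpa using aux_mem_of_closure_span ((ContinuousLinearMap.mul ℂ A).flip a) SI J hJcl h' hx
  -- J is essential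
  set SJ : Set A := {x : A | ∃ a : A, ∃ j ∈ J, x = a * j ∨ x = j * a} with hSJdef
  have hSJmem : SJ ⊆ (J : Set A) := by
    rintro x ⟨a, j, hj, rfl | rfl⟩
    · exact (hJ a j hj).1
    · exact (hJ a j hj).2
  have hessJ : (Submodule.span ℂ SJ).topologicalClosure = J := by
    apply le_antisymm
    · exact Submodule.topologicalClosure_minimal _ (Submodule.span_le.2 hSJmem) hJcl
    · refine Submodule.topologicalClosure_minimal _ (Submodule.span_le.2 ?_)
        (Submodule.isClosed_topologicalClosure _)
      rintro x ⟨a, i, hi, rfl | rfl⟩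
      · -- a * i
        have hmem : a ∈ (Submodule.span ℂ prods).topologicalClosure := by
          rw [hdense]; exact Submodule.mem_top
        have h' : ∀ y ∈ prods, ((ContinuousLinearMap.mul ℂ A).flip i) y ∈
            (Submodule.span ℂ SJ).topologicalClosure := by
          rintro y ⟨b, c, rfl⟩
          have hciJ : c * i ∈ J := hSIJ (c * i) ⟨c, i, hi, Or.inl rfl⟩
          have : (b * c) * i ∈ SJ := ⟨b, c * i, hciJ, Or.inl (mul_assoc b c i)⟩
          simpa using Submodule.le_topologicalClosure _ (Submodule.subset_span this)
        exact aux_mem_of_closure_span ((ContinuousLinearMap.mul ℂ A).flip i) prods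
          _ (Submodule.isClosed_topologicalClosure _) h' hmem
      · -- i * a
        have hmem : a ∈ (Submodule.span ℂ prods).topologicalClosure := by
          rw [hdense]; exact Submodule.mem_top
        have h' : ∀ y ∈ prods, (ContinuousLinearMap.mul ℂ A i) y ∈
            (Submodule.span ℂ SJ).topologicalClosure := by
          rintro y ⟨b, c, rfl⟩
          have hibJ : i * b ∈ J := hSIJ (i * b) ⟨b, i, hi, Or.inr rfl⟩
          have : i * (b * c) ∈ SJ := ⟨c, i * b, hibJ, Or.inr (mul_assoc i b c).symm⟩
          simpa using Submodule.le_topologicalClosure _ (Submodule.subset_span this)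
        exact aux_mem_of_closure_span (ContinuousLinearMap.mul ℂ A i) prods
          _ (Submodule.isClosed_topologicalClosure _) h' hmem
  -- the restriction derivation into J*
  let ι : ↥J →L[ℂ] ↥I :=
    LinearMap.mkContinuous (Submodule.inclusion hJI) 1 fun x => le_of_eq (by rw [one_mul]; rfl)
  let DJ : A →L[ℂ] (↥J →L[ℂ] ℂ) := ((ContinuousLinearMap.compL ℂ ↥J ↥I ℂ).flip ι).comp D
  have hDJapp : ∀ (a : A) (j : ↥J), DJ a j = D a ⟨(j : A), hJI j.2⟩ := by
    intro a j
    simp only [DJ, ContinuousLinearMap.comp_apply, ContinuousLinearMap.flip_apply,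
      ContinuousLinearMap.compL_apply]
    rfl
  have hDJ : ∀ a b : A, ∀ j : ↥J,
      DJ (a * b) j = DJ b ⟨(j : A) * a, (hJ a j j.2).2⟩ +
        DJ a ⟨b * (j : A), (hJ b j j.2).1⟩ := by
    intro a b j
    rw [hDJapp, hDJapp, hDJapp]
    exact hD a b ⟨(j : A), hJI j.2⟩
  obtain ⟨g, hg⟩ := hEss J hJcl hJ hessJ DJ hDJ
  -- extend g to a functional on I
  set J' : Submodule ℂ ↥I := J.comap I.subtype with hJ'def
  let eL : ↥J' →ₗ[ℂ] ↥J :=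
    { toFun := fun x => ⟨((x : ↥I) : A), x.2⟩
      map_add' := fun x y => rfl
      map_smul' := fun c x => rfl }
  let e : ↥J' →L[ℂ] ↥J := LinearMap.mkContinuous eL 1 fun x => le_of_eq (by rw [one_mul]; rfl)
  obtain ⟨f, hfext, -⟩ := exists_extension_norm_eq J' (g.comp e)
  have hfg : ∀ (v : A) (hvI : v ∈ I) (hvJ : v ∈ J), f ⟨v, hvI⟩ = g ⟨v, hvJ⟩ := by
    intro v hvI hvJ
    have := hfext ⟨⟨v, hvI⟩, hvJ⟩
    simpa [e, eL, ContinuousLinearMap.comp_apply] using this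
  -- the inner derivation implemented by f
  refine ⟨f, ?_⟩
  have memI : ∀ (a : A) (i : ↥I), (i : A) * a - a * (i : A) ∈ I :=
    fun a i => I.sub_mem (hI a i i.2).2 (hI a i i.2).1
  let B0 : A →ₗ[ℂ] ↥I →ₗ[ℂ] ℂ := LinearMap.mk₂ ℂ
    (fun a i => f ⟨(i : A) * a - a * (i : A), memI a i⟩)
    (by
      intro a b i
      rw [← map_add]
      congr 1
      apply Subtype.ext
      simp [mul_add, add_mul]
      abel)
    (by
      intro c a i
      rw [← map_smul]
      congr 1
      apply Subtype.ext
      simp [mul_smul_comm, smul_mul_assoc, smul_sub])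
    (by
      intro a i₁ i₂
      rw [← map_add]
      congr 1
      apply Subtype.ext
      simp [mul_add, add_mul]
      abel)
    (by
      intro c a i
      rw [← map_smul]
      congr 1
      apply Subtype.ext
      simp [mul_smul_comm, smul_mul_assoc, smul_sub])
  have hB0bound : ∀ (a : A) (i : ↥I), ‖B0 a i‖ ≤ (2 * ‖f‖) * ‖a‖ * ‖i‖ := by
    intro a i
    have h1 : ‖B0 a i‖ ≤ ‖f‖ * ‖(⟨(i : A) * a - a * (i : A), memI a i⟩ : ↥I)‖ :=
      f.le_opNorm _
    have h2 : ‖(⟨(i : A) * a - a * (i : A), memI a i⟩ : ↥I)‖ = ‖(i : A) * a - a * (i : A)‖ := rfl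
    have h3 : ‖(i : A) * a - a * (i : A)‖ ≤ ‖(i : A)‖ * ‖a‖ + ‖a‖ * ‖(i : A)‖ :=
      (norm_sub_le _ _).trans (add_le_add (norm_mul_le _ _) (norm_mul_le _ _))
    have h4 : ‖(i : A)‖ = ‖i‖ := rfl
    have hf0 : 0 ≤ ‖f‖ := norm_nonneg f
    calc ‖B0 a i‖ ≤ ‖f‖ * (‖i‖ * ‖a‖ + ‖a‖ * ‖i‖) := by
          rw [h2] at h1; exact h1.trans (by rw [← h4]; exact mul_le_mul_of_nonneg_left h3 hf0)
      _ = (2 * ‖f‖) * ‖a‖ * ‖i‖ := by ring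
  let EE : A →L[ℂ] (↥I →L[ℂ] ℂ) := LinearMap.mkContinuous₂ B0 (2 * ‖f‖) hB0bound
  have hEEapp : ∀ (a : A) (i : ↥I), EE a i = f ⟨(i : A) * a - a * (i : A), memI a i⟩ :=
    fun a i => rfl
  -- D agrees with EE on products
  have hgens : ∀ y ∈ prods, (D - EE) y ∈ (⊥ : Submodule ℂ (↥I →L[ℂ] ℂ)) := by
    rintro y ⟨b, c, rfl⟩
    rw [Submodule.mem_bot]
    have : D (b * c) = EE (b * c) := by
      ext i
      rw [hD b c i, hEEapp]
      have m1 : (i : A) * b ∈ J := hSIJ _ ⟨b, (i : A), i.2, Or.inr rfl⟩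
      have m2 : c * (i : A) ∈ J := hSIJ _ ⟨c, (i : A), i.2, Or.inl rfl⟩
      have e1 : D c ⟨(i : A) * b, (hI b i i.2).2⟩ = DJ c ⟨(i : A) * b, m1⟩ := by
        rw [hDJapp]
      have e2 : D b ⟨c * (i : A), (hI c i i.2).1⟩ = DJ b ⟨c * (i : A), m2⟩ := by
        rw [hDJapp]
      rw [e1, e2, hg c ⟨(i : A) * b, m1⟩, hg b ⟨c * (i : A), m2⟩, ← map_add]
      have mJ : (i : A) * (b * c) - (b * c) * (i : A) ∈ J :=
        J.sub_mem (hSIJ _ ⟨b * c, (i : A), i.2, Or.inr rfl⟩)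
          (hSIJ _ ⟨b * c, (i : A), i.2, Or.inl rfl⟩)
      have p1 : ((i : A) * b) * c - c * ((i : A) * b) ∈ J :=
        J.sub_mem (hJ c _ m1).2 (hJ c _ m1).1
      have p2 : (c * (i : A)) * b - b * (c * (i : A)) ∈ J :=
        J.sub_mem (hJ b _ m2).2 (hJ b _ m2).1
      have hsum : (⟨((i : A) * b) * c - c * ((i : A) * b), p1⟩ : ↥J) +
          ⟨(c * (i : A)) * b - b * (c * (i : A)), p2⟩ =
          ⟨(i : A) * (b * c) - (b * c) * (i : A), mJ⟩ := by
        apply Subtype.ext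
        show ((i : A) * b * c - c * ((i : A) * b)) + (c * (i : A) * b - b * (c * (i : A)))
          = (i : A) * (b * c) - (b * c) * (i : A)
        noncomm_ring
      rw [hsum, (hfg _ _ mJ).symm]
    rw [ContinuousLinearMap.sub_apply, this, sub_self]
  have hDa : ∀ a : A, D a = EE a := by
    intro a
    have hmem : a ∈ (Submodule.span ℂ prods).topologicalClosure := by
      rw [hdense]; exact Submodule.mem_top
    have hbot : IsClosed ((⊥ : Submodule ℂ (↥I →L[ℂ] ℂ)) : Set (↥I →L[ℂ] ℂ)) := by
      simp only [Submodule.bot_coe]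
      exact isClosed_singleton
    have h0 := aux_mem_of_closure_span (F := ↥I →L[ℂ] ℂ) (D - EE) prods
      (⊥ : Submodule ℂ (↥I →L[ℂ] ℂ)) hbot hgens hmem
    rw [Submodule.mem_bot, ContinuousLinearMap.sub_apply, sub_eq_zero] at h0
    exact h0
  intro a i
  rw [hDa a, hEEapp]
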